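/- Let C^{I_1},…,C^{I_t} be linear codes with C^{I_i} of dimension k_{I_i}, let C^F be a linear [n_F, k_F] code with k_F = Σ_i k_{I_i} and minimum distance d_F, and let φ be a linear bijection from the product of the initial codes to C^F that maps coordinates in U_i ⊆ [n_F] identically from C^{I_i}. If d_F > n_{I_1} - k_{I_1} + 1, then the set of read coordinates R_1 of C^{I_1} satisfies |R_1| ≥ k_{I_1}; equivalently, |U_1 \ R_1| ≤ d_F - 1 is impossible to violate without reading all information: assuming |U_1\R_1| > d_F - 1 leads to n_{I_1} - d_F + 1 ≥ k_{I_1}, a contradiction. -/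

import Mathlib

/-- `C` has minimum Hamming distance `d`. -/
def IsMinDist {ι F : Type*} [Fintype ι] [Field F] [DecidableEq F]
    (C : Submodule F (ι → F)) (d : ℕ) : Prop :=
  (∀ c ∈ C, c ≠ 0 → d ≤ hammingNorm c) ∧ ∃ c ∈ C, c ≠ 0 ∧ hammingNorm c = d

/-- In a `(t,1)` merge-convertible code (linear bijection `φ` from the product of the initial
codes to the final code, with unchanged coordinates `U_i` equal to the corresponding initial
coordinates `m_i`, written coordinates `Wr` determined by the read coordinates `R_i`, and
every final coordinate either written or unchanged):
if `d_F > n_{I_1} - k_{I_1} + 1`, then `|R_1| ≥ k_{I_1}`. -/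
theorem stmt19 {F : Type*} [Field F] [Fintype F] [DecidableEq F]
    {t : ℕ} (ht : 2 ≤ t) [NeZero t]
    (nI kI : Fin t → ℕ) {nF kF dF : ℕ}
    (CI : ∀ i : Fin t, Submodule F (Fin (nI i) → F))
    (CF : Submodule F (Fin nF → F))
    (hCI : ∀ i, Module.finrank F (CI i) = kI i)
    (hCF : Module.finrank F CF = kF)
    (hsum : kF = ∑ i, kI i)
    (hd : IsMinDist CF dF)
    (φ : (∀ i, CI i) ≃ₗ[F] CF)
    (U : Fin t → Finset (Fin nF)) (Wr : Finset (Fin nF))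
    (R : ∀ i, Finset (Fin (nI i)))
    (m : ∀ i, ↥(U i) → Fin (nI i))
    (hm : ∀ i, Function.Injective (m i))
    (hU : ∀ i, ∀ v : ∀ i, CI i, ∀ j : ↥(U i), (φ v).1 j.1 = (v i).1 (m i j))
    (hW : ∀ v v' : ∀ i, CI i,
      (∀ i, ∀ j ∈ R i, (v i).1 j = (v' i).1 j) → ∀ j ∈ Wr, (φ v).1 j = (φ v').1 j)
    (hpart : ∀ j : Fin nF, j ∈ Wr ∨ ∃ i, j ∈ U i)
    (hdF : (nI 0 : ℤ) - kI 0 + 1 < dF) :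
    kI 0 ≤ (R 0).card := by
  by_contra hcon
  push_neg at hcon
  -- kI 0 ≤ nI 0
  have hkn : kI 0 ≤ nI 0 := by
    rw [← hCI 0]
    have := Submodule.finrank_le (CI 0)
    simpa [Module.finrank_pi] using this
  -- extend R 0 to T of card kI 0 - 1
  obtain ⟨T, hRT, hTcard⟩ : ∃ T, R 0 ⊆ T ∧ T.card = kI 0 - 1 := by
    apply Finset.exists_superset_card_eq (by omega)
    simp; omega
  -- restriction map to T is not injective
  let f : CI 0 →ₗ[F] (↥T → F) :=
    { toFun := fun c j => c.1 j.1
      map_add' := by intros; rfl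
      map_smul' := by intros; rfl }
  have hfni : ¬ Function.Injective f := by
    intro hinj
    have := LinearMap.finrank_le_finrank_of_injective hinj
    rw [hCI 0] at this
    have hT : Module.finrank F (↥T → F) = T.card := by
      rw [Module.finrank_pi]; simp
    omega
  -- get a nonzero codeword vanishing on T
  rw [← LinearMap.ker_eq_bot] at hfni
  obtain ⟨c, hcker, hc0⟩ := (Submodule.ne_bot_iff _).mp hfni
  have hcT : ∀ j ∈ T, c.1 j = 0 := by
    intro j hj
    have h := congrFun (LinearMap.mem_ker.mp hcker) (⟨j, hj⟩ : ↥T)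
    simpa [f] using h
  -- the product codeword with c in slot 0
  classical
  let v : ∀ i, CI i := Pi.single 0 c
  have hv0 : (v 0 : Fin (nI 0) → F) = c.1 := by simp [v]
  have hvi : ∀ i, i ≠ 0 → v i = 0 := by intro i hi; simp [v, Pi.single_eq_of_ne hi]
  have hvne : v ≠ 0 := by
    intro h
    exact hc0 (by simpa [v] using congrFun h 0)
  have hφvne : (φ v : Fin nF → F) ≠ 0 := by
    intro h
    apply hvne
    apply φ.injective
    rw [φ.map_zero]
    exact Subtype.ext h
  -- φ v agrees with φ 0 = 0 on Wr
  have hWr0 : ∀ j ∈ Wr, (φ v).1 j = 0 := by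
    intro j hj
    have := hW v 0 (fun i k hk => by
      by_cases hi : i = 0
      · subst hi
        rw [hv0, hcT k (hRT hk)]; rfl
      · rw [hvi i hi]; rfl) j hj
    rw [this, φ.map_zero]; rfl
  -- every nonzero coordinate of φ v lies in U 0 with value c (m 0 ⟨j,_⟩)
  have hsupp : ∀ j : Fin nF, (φ v).1 j ≠ 0 → ∃ h : j ∈ U 0, c.1 (m 0 ⟨j, h⟩) ≠ 0 := by
    intro j hj
    rcases hpart j with hw | ⟨i, hiU⟩
    · exact absurd (hWr0 j hw) hj
    · by_cases hi : i = 0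
      · subst hi
        refine ⟨hiU, ?_⟩
        have := hU 0 v ⟨j, hiU⟩
        rw [hv0] at this
        rw [← this]; exact hj
      · exfalso
        have := hU i v ⟨j, hiU⟩
        rw [hvi i hi] at this
        exact hj (by rw [this]; rfl)
  -- nI 0 is nonempty since c ≠ 0
  have hcne : ∃ k, c.1 k ≠ 0 := by
    by_contra h
    push_neg at h
    exact hc0 (Subtype.ext (funext h))
  obtain ⟨k0, _⟩ := hcne
  -- hammingNorm (φ v) ≤ hammingNorm c
  have h1 : hammingNorm (φ v : Fin nF → F) ≤ hammingNorm c.1 := by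
    unfold hammingNorm
    apply Finset.card_le_card_of_injOn
      (fun j => if h : j ∈ U 0 then m 0 ⟨j, h⟩ else k0)
    · intro j hj
      simp only [Finset.coe_filter, Set.mem_setOf_eq, Finset.mem_filter, Finset.mem_univ, true_and] at hj ⊢
      obtain ⟨h, hne⟩ := hsupp j hj
      rw [dif_pos h]
      exact hne
    · intro a ha b hb hab
      simp only [Finset.coe_filter, Set.mem_setOf_eq, Finset.mem_univ, true_and] at ha hb
      obtain ⟨ha', _⟩ := hsupp a ha
      obtain ⟨hb', _⟩ := hsupp b hb
      have hab' : m 0 ⟨a, ha'⟩ = m 0 ⟨b, hb'⟩ := by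
        simpa [dif_pos ha', dif_pos hb'] using hab
      exact congrArg Subtype.val (hm 0 hab')
  -- hammingNorm c ≤ nI 0 - (kI 0 - 1)
  have h2 : hammingNorm c.1 ≤ nI 0 - (kI 0 - 1) := by
    unfold hammingNorm
    have hsub : Finset.univ.filter (fun k => c.1 k ≠ 0) ⊆ Tᶜ := by
      intro k hk
      simp only [Finset.mem_filter] at hk
      simp only [Finset.mem_compl]
      intro hkT
      exact hk.2 (hcT k hkT)
    calc (Finset.univ.filter (fun k => c.1 k ≠ 0)).card ≤ Tᶜ.card :=
          Finset.card_le_card hsub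
      _ = nI 0 - (kI 0 - 1) := by rw [Finset.card_compl, hTcard]; simp
  -- minimum distance bound
  have h3 : dF ≤ hammingNorm (φ v : Fin nF → F) := hd.1 _ (φ v).2 hφvne
  omega
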